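/- Let f be a normalized nondegenerate C² speed with c = f_x(0,1). The slope of the bowl-type solution satisfies v(r) = r - c/r + o(r⁻²) as r → ∞, and hence the graph height u (with u' = v) satisfies u(r) = r²/2 - c·log r + C + o(r⁻¹) for some constant C, as r → ∞. -/

import Mathlib

open Filter Set

lemma myMono {g g' : ℝ → ℝ} {a : ℝ}
    (hg : ∀ x, a ≤ x → HasDerivAt g (g' x) x)
    (h0 : ∀ x, a ≤ x → 0 ≤ g' x) :
    ∀ x y, a ≤ x → x ≤ y → g x ≤ g y := by
  intro x y hax hxy
  have hm : MonotoneOn g (Ici a) := by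
    apply monotoneOn_of_hasDerivWithinAt_nonneg (convex_Ici a) (f' := g')
    · exact fun z hz => (hg z hz).continuousAt.continuousWithinAt
    · intro z hz
      rw [interior_Ici] at hz
      exact ((hg z (le_of_lt hz)).hasDerivWithinAt)
    · intro z hz
      rw [interior_Ici] at hz
      exact h0 z (le_of_lt hz)
  exact hm hax (hax.trans hxy) hxy

lemma myAnti {g g' : ℝ → ℝ} {a : ℝ}
    (hg : ∀ x, a ≤ x → HasDerivAt g (g' x) x)
    (h0 : ∀ x, a ≤ x → g' x ≤ 0) :
    ∀ x y, a ≤ x → x ≤ y → g y ≤ g x := by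
  intro x y hax hxy
  have := myMono (g := fun x => -g x) (g' := fun x => -(g' x)) (a := a)
    (fun z hz => (hg z hz).neg) (fun z hz => by simpa using h0 z hz) x y hax hxy
  have h2 : -g x ≤ -g y := this
  linarith

lemma myBarrier {φ B φ' B' : ℝ → ℝ} {a : ℝ}
    (hφ : ∀ x, a ≤ x → HasDerivAt φ (φ' x) x)
    (hB : ∀ x, a ≤ x → HasDerivAt B (B' x) x)
    (hab : φ a ≤ B a)
    (hcross : ∀ x, a ≤ x → φ x = B x → φ' x < B' x) :
    ∀ x, a ≤ x → φ x ≤ B x := by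
  intro x hx
  have h := image_le_of_deriv_right_lt_deriv_boundary' (a := a) (b := x)
    (f := φ) (f' := φ') (B := B) (B' := B')
    (fun z hz => (hφ z hz.1).continuousAt.continuousWithinAt)
    (fun z hz => (hφ z hz.1).hasDerivWithinAt)
    hab
    (fun z hz => (hB z hz.1).continuousAt.continuousWithinAt)
    (fun z hz => (hB z hz.1).hasDerivWithinAt)
    (fun z hz hfz => hcross z hz.1 hfz)
  exact h (mem_Icc.2 ⟨hx, le_refl x⟩)

lemma myLinear (f : ℝ × ℝ → ℝ) (hf : ContDiff ℝ 2 f)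
    (hhom : ∀ c : ℝ, 0 < c → ∀ x y : ℝ, f (c * x, c * y) = c * f (x, y)) :
    ∀ x y : ℝ, f (x, y) = x * (fderiv ℝ f 0 (1, 0)) + y * (fderiv ℝ f 0 (0, 1)) := by
  have hdiff : Differentiable ℝ f := hf.differentiable (by norm_num)
  -- fderiv is scale invariant
  have hder_eq : ∀ t : ℝ, 0 < t → ∀ z : ℝ × ℝ, fderiv ℝ f (t • z) = fderiv ℝ f z := by
    intro t ht z
    have hfun : (fun w : ℝ × ℝ => f (t • w)) = fun w : ℝ × ℝ => t * f w := by
      funext w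
      have h1 : t • w = (t * w.1, t * w.2) := by
        ext <;> simp [Prod.smul_fst, Prod.smul_snd, smul_eq_mul]
      rw [h1, hhom t ht w.1 w.2]
    have hL : HasFDerivAt (fun w : ℝ × ℝ => f (t • w))
        ((fderiv ℝ f (t • z)).comp (t • ContinuousLinearMap.id ℝ (ℝ × ℝ))) z := by
      have h2 : HasFDerivAt (fun w : ℝ × ℝ => t • w)
          (t • ContinuousLinearMap.id ℝ (ℝ × ℝ)) z := by
        exact (t • ContinuousLinearMap.id ℝ (ℝ × ℝ)).hasFDerivAt (x := z)
      exact (hdiff (t • z)).hasFDerivAt.comp z h2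
    have hR : HasFDerivAt (fun w : ℝ × ℝ => t * f w) (t • fderiv ℝ f z) z :=
      (hdiff z).hasFDerivAt.const_mul t
    rw [hfun] at hL
    have heq := hL.unique hR
    refine ContinuousLinearMap.ext fun w => ?_
    have := congrArg (fun (L : (ℝ × ℝ) →L[ℝ] ℝ) => L w) heq
    simp only [ContinuousLinearMap.comp_apply, ContinuousLinearMap.smul_apply,
      ContinuousLinearMap.id_apply, smul_eq_mul] at this
    have := mul_left_cancel₀ (ne_of_gt ht) (by simpa [map_smul, smul_eq_mul] using this)
    exact this
  have hcont : Continuous (fderiv ℝ f) := (hf.fderiv_right (m := 1) (by norm_num)).continuous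
  have hconst : ∀ z : ℝ × ℝ, fderiv ℝ f z = fderiv ℝ f 0 := by
    intro z
    have h1 : Tendsto (fun t : ℝ => fderiv ℝ f (t • z)) (nhdsWithin 0 (Ioi 0))
        (nhds (fderiv ℝ f 0)) := by
      have h2 : Tendsto (fun t : ℝ => t • z) (nhdsWithin 0 (Ioi 0)) (nhds ((0 : ℝ) • z)) :=
        ((continuous_id.smul continuous_const).tendsto 0).mono_left nhdsWithin_le_nhds
      rw [zero_smul] at h2
      exact (hcont.tendsto 0).comp h2
    have h3 : Tendsto (fun _ : ℝ => fderiv ℝ f z) (nhdsWithin 0 (Ioi 0))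
        (nhds (fderiv ℝ f 0)) := by
      refine h1.congr' ?_
      filter_upwards [self_mem_nhdsWithin] with t ht
      exact hder_eq t ht z
    exact (tendsto_nhds_unique h3 tendsto_const_nhds).symm
  have hf00 : f 0 = 0 := by
    have := hhom 2 (by norm_num) 0 0
    norm_num at this
    rw [show (0 : ℝ × ℝ) = (0, 0) from rfl]
    linarith
  have hsub : ∀ z : ℝ × ℝ, f z = fderiv ℝ f 0 z := by
    have hg : Differentiable ℝ (fun z : ℝ × ℝ => f z - fderiv ℝ f 0 z) :=
      hdiff.sub (fderiv ℝ f 0).differentiable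
    have hg' : ∀ z : ℝ × ℝ, fderiv ℝ (fun z : ℝ × ℝ => f z - fderiv ℝ f 0 z) z = 0 := by
      intro z
      have h1 : HasFDerivAt (fun z : ℝ × ℝ => f z - fderiv ℝ f 0 z)
          (fderiv ℝ f z - fderiv ℝ f 0) z :=
        (hdiff z).hasFDerivAt.sub (fderiv ℝ f 0).hasFDerivAt
      rw [h1.fderiv, hconst z, sub_self]
    intro z
    have := is_const_of_fderiv_eq_zero hg hg' z 0
    simp only [map_zero, sub_zero] at this
    have h2 : f z - fderiv ℝ f 0 z = f 0 - 0 := by simpa using this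
    rw [hf00] at h2
    linarith
  intro x y
  have hxy : ((x, y) : ℝ × ℝ) = x • ((1 : ℝ), (0 : ℝ)) + y • ((0 : ℝ), (1 : ℝ)) := by
    ext <;> simp
  rw [hsub (x, y), hxy, map_add, map_smul, map_smul, smul_eq_mul, smul_eq_mul]

lemma myDerivInv (K x : ℝ) (hx : x ≠ 0) : HasDerivAt (fun y => K / y) (-(K / x^2)) x := by
  have h := (hasDerivAt_inv hx).const_mul K
  simp only [div_eq_mul_inv, mul_neg] at h ⊢
  exact h

lemma myDerivInvSq (K x : ℝ) (hx : x ≠ 0) : HasDerivAt (fun y => K / y^2) (-(2*K/x^3)) x := by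
  have h := (hasDerivAt_const x K).div (hasDerivAt_pow 2 x) (pow_ne_zero 2 hx)
  refine h.congr_deriv ?_
  field_simp
  ring
section stages
variable {c : ℝ} {v dv : ℝ → ℝ}

lemma stage1L (hcpos : 0 < c)
    (hodeD : ∀ r : ℝ, 0 < r → HasDerivAt v (dv r) r)
    (hdv : ∀ r : ℝ, 0 < r → dv r = (1 + v r ^ 2) * (r - v r) / (c * r)) :
    ∃ R1 : ℝ, 1 ≤ R1 ∧ ∀ r, R1 ≤ r → v r ≤ r := by
  by_cases hcase : ∃ r₁, 1 ≤ r₁ ∧ v r₁ ≤ r₁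
  · obtain ⟨r₁, hr₁, hv₁⟩ := hcase
    refine ⟨r₁, hr₁, ?_⟩
    have hbar := myBarrier (φ := v) (B := fun x => x) (φ' := dv) (B' := fun _ => 1)
      (a := r₁)
      (fun x hx => hodeD x (by linarith))
      (fun x _ => hasDerivAt_id x)
      hv₁
      ?_
    · exact fun r hr => hbar r hr
    · intro x hx hvx
      have hx0 : (0:ℝ) < x := by linarith
      rw [hdv x hx0, hvx]
      rw [sub_self, mul_zero, zero_div]
      norm_num
  · push_neg at hcase
    exfalso
    have hanti := myAnti (g := v) (g' := dv) (a := 1)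
      (fun x hx => hodeD x (by linarith))
      (fun x hx => by
        have hx0 : (0:ℝ) < x := by linarith
        rw [hdv x hx0]
        apply div_nonpos_of_nonpos_of_nonneg _ (by positivity)
        have := hcase x hx
        nlinarith [sq_nonneg (v x)])
    set T := max 1 (v 1) + 1 with hTdef
    have hT1 : (1:ℝ) ≤ T := by
      have := le_max_left 1 (v 1)
      simp only [hTdef]
      linarith
    have h1 : v T ≤ v 1 := hanti 1 T le_rfl hT1
    have h2 : T < v T := hcase T hT1
    have h3 : v 1 ≤ max 1 (v 1) := le_max_right _ _
    have h4 : max 1 (v 1) + 1 ≤ T := le_of_eq hTdef.symm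
    linarith

lemma stage2L (hcpos : 0 < c)
    (hodeD : ∀ r : ℝ, 0 < r → HasDerivAt v (dv r) r)
    (hdv : ∀ r : ℝ, 0 < r → dv r = (1 + v r ^ 2) * (r - v r) / (c * r))
    {R1 : ℝ} (hR11 : 1 ≤ R1) :
    ∃ R2 : ℝ, R1 ≤ R2 ∧ 1 ≤ R2 ∧ ∀ r, R2 ≤ r → r / 2 ≤ v r := by
  set A := max R1 (2*c + 2) with hAdef
  have hAR1 : R1 ≤ A := le_max_left _ _
  have hA1 : 1 ≤ A := le_trans hR11 hAR1
  have hAc : 2*c + 2 ≤ A := le_max_right _ _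
  by_cases hcase : ∃ r₂, A ≤ r₂ ∧ r₂ / 2 ≤ v r₂
  · obtain ⟨r₂, hr₂, hv₂⟩ := hcase
    refine ⟨r₂, le_trans hAR1 hr₂, le_trans hA1 hr₂, ?_⟩
    have hbar := myBarrier (φ := fun x => x / 2) (B := v) (φ' := fun _ => 1/2) (B' := dv)
      (a := r₂)
      (fun x _ => by simpa using (hasDerivAt_id x).div_const 2)
      (fun x hx => hodeD x (by linarith))
      hv₂
      ?_
    · exact fun r hr => hbar r hr
    · intro x hx hvx
      have hx0 : (0:ℝ) < x := by linarith
      have hxA : 2*c + 2 ≤ x := by linarith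
      rw [hdv x hx0, ← hvx]
      rw [lt_div_iff₀ (by positivity)]
      nlinarith [mul_nonneg (sub_nonneg.2 hxA) hx0.le, sq_nonneg x, hcpos]
  · push_neg at hcase
    exfalso
    set T := A + 8 * c with hTdef
    have hTA : A ≤ T := by simp only [hTdef]; linarith
    have harc : ∀ x, A ≤ x → HasDerivAt (fun r => Real.arctan (v r) - r / (2*c))
        (1 / (1 + (v x)^2) * dv x - 1/(2*c)) x := by
      intro x hx
      have hx0 : (0:ℝ) < x := by linarith
      have h1 : HasDerivAt (fun r => Real.arctan (v r)) (1 / (1 + (v x)^2) * dv x) x :=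
        (Real.hasDerivAt_arctan (v x)).comp x (hodeD x hx0)
      have h2 : HasDerivAt (fun r : ℝ => r / (2*c)) (1/(2*c)) x := by
        simpa using (hasDerivAt_id x).div_const (2*c)
      exact h1.sub h2
    have hge : ∀ x, A ≤ x → 0 ≤ 1 / (1 + (v x)^2) * dv x - 1/(2*c) := by
      intro x hx
      have hx0 : (0:ℝ) < x := by linarith
      have hv2 : (0:ℝ) < 1 + (v x)^2 := by positivity
      have h5 : 1 / (1 + (v x)^2) * dv x = (x - v x)/(c*x) := by
        rw [hdv x hx0]
        field_simp
      rw [h5]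
      rw [sub_nonneg, div_le_div_iff₀ (by positivity) (by positivity)]
      have h6 := hcase x hx
      nlinarith [mul_pos hcpos hx0]
    have hmono := myMono harc hge A T le_rfl hTA
    have h1 := Real.arctan_lt_pi_div_two (v T)
    have h2 := Real.neg_pi_div_two_lt_arctan (v A)
    have hpi := Real.pi_lt_d2
    have hTc : T / (2*c) - A / (2*c) = 4 := by
      simp only [hTdef]
      field_simp
      ring
    linarith

set_option maxHeartbeats 1000000 in
lemma stage25L (hcpos : 0 < c)
    (hodeD : ∀ r : ℝ, 0 < r → HasDerivAt v (dv r) r)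
    (hdv : ∀ r : ℝ, 0 < r → dv r = (1 + v r ^ 2) * (r - v r) / (c * r))
    {R2 : ℝ} (hR21 : 1 ≤ R2)
    (hs2 : ∀ r, R2 ≤ r → r / 2 ≤ v r)
    (hs1 : ∀ r, R2 ≤ r → v r ≤ r) :
    ∃ R3 : ℝ, R2 ≤ R3 ∧ 1 ≤ R3 ∧ ∀ r, R3 ≤ r → r - (12*c+1) / r ≤ v r := by
  obtain ⟨K, hKdef⟩ : ∃ K : ℝ, K = 12*c + 1 := ⟨_, rfl⟩
  rw [← hKdef]
  have hKpos : 0 < K := by rw [hKdef]; linarith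
  have hK12 : 12*c ≤ K := by rw [hKdef]; linarith
  have hKval : K = 12*c + 1 := hKdef
  set A := max R2 (K + 1) with hAdef
  have hAR2 : R2 ≤ A := le_max_left _ _
  have hA1 : 1 ≤ A := le_trans hR21 hAR2
  have hAK : K + 1 ≤ A := le_max_right _ _
  by_cases hcase : ∃ r₃, A ≤ r₃ ∧ r₃ - K / r₃ ≤ v r₃
  · obtain ⟨r₃, hr₃, hv₃⟩ := hcase
    refine ⟨r₃, le_trans hAR2 hr₃, le_trans hA1 hr₃, ?_⟩
    have hbar := myBarrier (φ := fun x => x - K / x) (B := v)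
      (φ' := fun x => 1 + K / x^2) (B' := dv) (a := r₃)
      (fun x hx => by
        have hx0 : (0:ℝ) < x := by linarith
        have h := (hasDerivAt_id x).sub (myDerivInv K x hx0.ne'); simp only [sub_neg_eq_add] at h; exact h)
      (fun x hx => hodeD x (by linarith))
      hv₃
      ?_
    · exact fun r hr => hbar r hr
    · intro x hx hvx
      have hx0 : (0:ℝ) < x := by linarith
      have hxK : K + 1 ≤ x := by linarith
      have hx1 : 1 ≤ x := by linarith
      rw [hdv x hx0, ← hvx]
      have hkey : (1 + (x - K/x)^2) * (x - (x - K/x)) / (c*x) - (1 + K/x^2)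
          = (K*(x^2 + (x^2 - K)^2) - c*x^2*(x^2 + K)) / (c*x^4) := by
        field_simp
        ring
      have hx2K : 2*K ≤ x^2 := by nlinarith
      have hnum : 0 < K*(x^2 + (x^2 - K)^2) - c*x^2*(x^2 + K) := by
        have hKx : K ≤ x := by linarith
        have h7 : K*(x^2/2)^2 ≤ K*(x^2-K)^2 := by
          apply mul_le_mul_of_nonneg_left _ hKpos.le
          nlinarith
        have h11 : 3*c*x^4 + x^4/4 ≤ K*(x^2/2)^2 := by
          have he : K*(x^2/2)^2 = 3*c*x^4 + x^4/4 + (K - 12*c - 1)*x^4/4 := by ring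
          rw [he, hKval]
          nlinarith [pow_nonneg hx0.le 4]
        have h12 : c*K*x^2 ≤ c*x*x^2 :=
          mul_le_mul_of_nonneg_right (mul_le_mul_of_nonneg_left hKx hcpos.le) (sq_nonneg x)
        have h13 : c*x*x^2 ≤ c*x^4 := by
          nlinarith [mul_le_mul_of_nonneg_left hx1 (mul_nonneg hcpos.le (pow_nonneg hx0.le 3))]
        have h14 : (0:ℝ) < K*x^2 := by positivity
        have h15 : (0:ℝ) ≤ c*x^4 := by positivity
        nlinarith [h7, h11, h12, h13, h14, h15]
      have hpos := div_pos hnum (by positivity : (0:ℝ) < c*x^4)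
      linarith
  · push_neg at hcase
    exfalso
    have hmono := myMono (g := fun r => v r - 3*r) (g' := fun r => dv r - 3) (a := A)
      (fun x hx => ((hodeD x (by linarith)).sub (by
        simpa using (hasDerivAt_id x).const_mul (3:ℝ))))
      (fun x hx => by
        show (0:ℝ) ≤ dv x - 3
        have hx0 : (0:ℝ) < x := by linarith
        have h1 := hcase x hx
        have h2 := hs2 x (le_trans hAR2 hx)
        have h3 := hs1 x (le_trans hAR2 hx)
        rw [hdv x hx0]
        rw [sub_nonneg, le_div_iff₀ (by positivity)]
        have h4 : K/x < x - v x := by linarith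
        have h5 : (x/2)^2 ≤ (v x)^2 := by nlinarith
        have h6 : 3*(c*x) ≤ (x/2)^2 * (K/x) := by
          rw [← mul_div_assoc, le_div_iff₀ hx0]
          have hx12 : 1 ≤ x^2 := by nlinarith
          have hq : (x/2)^2 * (12*c) ≤ (x/2)^2 * K :=
            mul_le_mul_of_nonneg_left hK12 (sq_nonneg _)
          nlinarith [hq]
        calc 3*(c*x) ≤ (x/2)^2 * (K/x) := h6
          _ ≤ (v x)^2 * (x - v x) := by
              apply mul_le_mul h5 h4.le (by positivity) (sq_nonneg _)
          _ ≤ (1 + (v x)^2) * (x - v x) := by nlinarith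
        )
      A (2*A) le_rfl (by linarith)
    have h1 : A/2 ≤ v A := hs2 A hAR2
    have h2 : v (2*A) ≤ 2*A := hs1 (2*A) (by linarith)
    linarith

set_option maxHeartbeats 4000000 in
lemma claimUL (hcpos : 0 < c)
    (hvpos : ∀ r : ℝ, 0 < r → 0 < v r)
    (hodeD : ∀ r : ℝ, 0 < r → HasDerivAt v (dv r) r)
    (hdv : ∀ r : ℝ, 0 < r → dv r = (1 + v r ^ 2) * (r - v r) / (c * r))
    {R3 : ℝ} (hR31 : 1 ≤ R3)
    (hup : ∀ r, R3 ≤ r → v r ≤ r) :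
    ∀ ε : ℝ, 0 < ε → ∃ R, 1 ≤ R ∧ ∀ r, R ≤ r → v r ≤ r - c/r + ε/r^2 := by
  intro ε hε
  set A := max R3 (3*c/ε + 3*c^3/ε + 6*c + (ε+1)/c + 2*c/ε + c + 2*(c+c^3)/ε + 1) with hAdef
  have hAR3 : R3 ≤ A := le_max_left _ _
  have hS : 3*c/ε + 3*c^3/ε + 6*c + (ε+1)/c + 2*c/ε + c + 2*(c+c^3)/ε + 1 ≤ A :=
    le_max_right _ _
  have n1 : (0:ℝ) ≤ 3*c/ε := by positivity
  have n2 : (0:ℝ) ≤ 3*c^3/ε := by positivity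
  have n3 : (0:ℝ) ≤ 6*c := by positivity
  have n4 : (0:ℝ) ≤ (ε+1)/c := by positivity
  have n5 : (0:ℝ) ≤ 2*c/ε := by positivity
  have n6 : (0:ℝ) ≤ c := hcpos.le
  have n7 : (0:ℝ) ≤ 2*(c+c^3)/ε := by positivity
  have hA1 : 1 ≤ A := by linarith
  have hxf : ∀ x, A ≤ x → 1 ≤ x ∧ 3*c ≤ x*ε ∧ 3*c^3 ≤ x^3*ε ∧ 6*c ≤ x^2 ∧
      ε + 1 ≤ x*c ∧ 2*c ≤ x*ε ∧ c ≤ x ∧ 2*(c+c^3) ≤ x*ε := by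
    intro x hx
    have hx1 : 1 ≤ x := le_trans hA1 hx
    have hx0 : (0:ℝ) < x := by linarith
    have hxx2 : x ≤ x^2 := by nlinarith [mul_nonneg (sub_nonneg.2 hx1) hx0.le]
    have hxx3 : x ≤ x^3 := by nlinarith [mul_le_mul_of_nonneg_left hxx2 hx0.le]
    refine ⟨hx1, ?_, ?_, ?_, ?_, ?_, ?_, ?_⟩
    · have t : 3*c/ε ≤ x := by linarith
      have := (div_le_iff₀ hε).1 t
      linarith
    · have t : 3*c^3/ε ≤ x := by linarith
      have h := (div_le_iff₀ hε).1 t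
      nlinarith [mul_le_mul_of_nonneg_right hxx3 hε.le]
    · have t : 6*c ≤ x := by linarith
      linarith
    · have t : (ε+1)/c ≤ x := by linarith
      have := (div_le_iff₀ hcpos).1 t
      linarith
    · have t : 2*c/ε ≤ x := by linarith
      have := (div_le_iff₀ hε).1 t
      linarith
    · linarith
    · have t : 2*(c+c^3)/ε ≤ x := by linarith
      have := (div_le_iff₀ hε).1 t
      linarith
  by_cases hcase : ∃ r₄, A ≤ r₄ ∧ v r₄ ≤ r₄ - c/r₄ + ε/r₄^2
  · obtain ⟨r₄, hr₄, hv₄⟩ := hcase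
    refine ⟨r₄, le_trans hA1 hr₄, ?_⟩
    have hbar := myBarrier (φ := v) (B := fun x => x - c/x + ε/x^2)
      (φ' := dv) (B' := fun x => 1 + c/x^2 - 2*ε/x^3) (a := r₄)
      (fun x hx => hodeD x (by linarith))
      (fun x hx => by
        have hx0 : (0:ℝ) < x := by linarith
        have h := ((hasDerivAt_id x).sub (myDerivInv c x hx0.ne')).add
          (myDerivInvSq ε x hx0.ne')
        refine h.congr_deriv ?_
        ring)
      hv₄
      ?_
    · exact fun r hr => hbar r hr
    · intro x hx hvx
      have hxA : A ≤ x := le_trans hr₄ hx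
      obtain ⟨hx1, hc1, hc2, hc3, hc4, hc5, hc6, hc7⟩ := hxf x hxA
      have hx0 : (0:ℝ) < x := by linarith
      rw [hdv x hx0, hvx]
      have hkey : (1 + c/x^2 - 2*ε/x^3) -
          (1 + (x - c/x + ε/x^2)^2) * (x - (x - c/x + ε/x^2)) / (c*x)
          = (ε*x^6 + 2*(c*x-ε)^2*x^3 + c^2*x^5 - (c*x-ε)*x^4 - (c*x-ε)^3 - 2*ε*c*x^4)
            / (c*x^7) := by
        field_simp
        ring
      have hnum : 0 < ε*x^6 + 2*(c*x-ε)^2*x^3 + c^2*x^5 - (c*x-ε)*x^4 - (c*x-ε)^3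
          - 2*ε*c*x^4 := by
        have hN0 : 0 < c*x - ε := by linarith
        have hNle : c*x - ε ≤ c*x := by linarith
        have p1 : (c*x-ε)*x^4 ≤ c*x^5 := by
          nlinarith [mul_nonneg hε.le (pow_nonneg hx0.le 4)]
        have p2 : (c*x-ε)^3 ≤ (c*x)^3 := pow_le_pow_left₀ hN0.le hNle 3
        have q1 : c*x^5 ≤ ε*x^6/3 := by
          nlinarith [mul_nonneg (sub_nonneg.2 hc1) (pow_nonneg hx0.le 5)]
        have q2 : (c*x)^3 ≤ ε*x^6/3 := by
          nlinarith [mul_nonneg (sub_nonneg.2 hc2) (pow_nonneg hx0.le 3)]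
        have q3 : 2*ε*c*x^4 ≤ ε*x^6/3 := by
          nlinarith [mul_nonneg (sub_nonneg.2 hc3) (mul_nonneg hε.le (pow_nonneg hx0.le 4))]
        have q5 : (0:ℝ) ≤ 2*(c*x-ε)^2*x^3 := by positivity
        have q6 : (0:ℝ) < c^2*x^5 := by positivity
        have p2' : (c*x-ε)^3 ≤ ε*x^6/3 := p2.trans q2
        linarith only [p1, p2', q1, q3, q5, q6]
      have hpos := div_pos hnum (show (0:ℝ) < c*x^7 by positivity)
      linarith
  · push_neg at hcase
    exfalso
    set T := A * Real.exp (2*c^2/ε + 1) with hTdef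
    have hA0 : (0:ℝ) < A := by linarith
    have hexp1 : (1:ℝ) ≤ Real.exp (2*c^2/ε + 1) := by
      rw [Real.one_le_exp_iff]
      positivity
    have hTA : A ≤ T := by
      calc A = A * 1 := by ring
      _ ≤ A * Real.exp (2*c^2/ε + 1) := by
          apply mul_le_mul_of_nonneg_left hexp1 hA0.le
    have hψd : ∀ x, A ≤ x → HasDerivAt
        (fun r => v r - r + c/r + (ε/(2*c)) * Real.log r)
        (dv x - 1 + (-(c/x^2)) + (ε/(2*c)) * x⁻¹) x := by
      intro x hx
      have hx0 : (0:ℝ) < x := by linarith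
      exact (((hodeD x hx0).sub (hasDerivAt_id x)).add (myDerivInv c x hx0.ne')).add
        ((Real.hasDerivAt_log hx0.ne').const_mul (ε/(2*c)))
    have hψ0 : ∀ x, A ≤ x → dv x - 1 + (-(c/x^2)) + (ε/(2*c)) * x⁻¹ ≤ 0 := by
      intro x hx
      obtain ⟨hx1, hc1, hc2, hc3, hc4, hc5, hc6, hc7⟩ := hxf x hx
      have hx0 : (0:ℝ) < x := by linarith
      have hreg := hcase x hx
      have hvx : v x ≤ x := hup x (le_trans hAR3 hx)
      set b := x - v x with hbdef
      have hvb : v x = x - b := by simp only [hbdef]; ring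
      have hb0 : 0 ≤ b := by simp only [hbdef]; linarith
      have hbx : b ≤ x := by
        have := hvpos x hx0
        simp only [hbdef]; linarith
      have hbe : b*x^2 ≤ c*x - ε := by
        have h1 : b < c/x - ε/x^2 := by simp only [hbdef]; linarith
        have h2 : (c/x - ε/x^2)*x^2 = c*x - ε := by field_simp
        nlinarith [pow_pos hx0 2]
      clear_value b
      have hkey2 : dv x - 1 + (-(c/x^2)) + (ε/(2*c)) * x⁻¹
          = ((1 + (x - b)^2)*b*x^2 - (c*x^3 + c^2*x) + ε*x^2/2) / (c*x^3) := by
        rw [hdv x hx0, hvb]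
        field_simp
        ring
      have hnum2 : (1 + (x - b)^2)*b*x^2 - (c*x^3 + c^2*x) + ε*x^2/2 ≤ 0 := by
        have s1 : b*x^4 ≤ (c*x - ε)*x^2 := by
          nlinarith [mul_le_mul_of_nonneg_right hbe (sq_nonneg x)]
        have s2 : b*x^2 ≤ c*x - ε := hbe
        have s3 : b^3*x^2 ≤ b^2*x^3 := by
          nlinarith [mul_le_mul_of_nonneg_left hbx (mul_nonneg (sq_nonneg b) (sq_nonneg x))]
        have s4 : c*x ≤ ε*x^2/2 := by
          nlinarith [mul_nonneg (sub_nonneg.2 hc5) hx0.le]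
        have s5 : (0:ℝ) ≤ b^2*x^3 := by positivity
        have s6 : (0:ℝ) ≤ c^2*x := by positivity
        have s7 : (0:ℝ) ≤ ε := hε.le
        linarith only [s1, s2, s3, s4, s5, s6, s7]
      rw [hkey2]
      exact div_nonpos_of_nonpos_of_nonneg hnum2 (by positivity)
    have hanti := myAnti hψd hψ0 A T le_rfl hTA
    have hT0 : (0:ℝ) < T := by
      simp only [hTdef]
      positivity
    have hlogT : Real.log T = Real.log A + (2*c^2/ε + 1) := by
      simp only [hTdef]
      rw [Real.log_mul hA0.ne' (Real.exp_ne_zero _), Real.log_exp]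
    have hregT := hcase T hTA
    have hvA : v A ≤ A := hup A hAR3
    have hcA : c/A ≤ c := div_le_self hcpos.le hA1
    have hεT : 0 < ε/T^2 := by positivity
    have harith : (ε/(2*c)) * (2*c^2/ε + 1) = c + ε/(2*c) := by
      field_simp
    have hε2c : 0 < ε/(2*c) := by positivity
    nlinarith [hanti, hregT, hεT]

set_option maxHeartbeats 4000000 in
lemma claimLL (hcpos : 0 < c)
    (hvpos : ∀ r : ℝ, 0 < r → 0 < v r)
    (hodeD : ∀ r : ℝ, 0 < r → HasDerivAt v (dv r) r)
    (hdv : ∀ r : ℝ, 0 < r → dv r = (1 + v r ^ 2) * (r - v r) / (c * r))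
    {R3 : ℝ} (hR31 : 1 ≤ R3)
    (hup : ∀ r, R3 ≤ r → v r ≤ r)
    (hlow : ∀ r, R3 ≤ r → r - (12*c+1) / r ≤ v r) :
    ∀ ε : ℝ, 0 < ε → ∃ R, 1 ≤ R ∧ ∀ r, R ≤ r → r - c/r - ε/r^2 ≤ v r := by
  intro ε hε
  obtain ⟨K, hKdef⟩ : ∃ K : ℝ, K = 12*c + 1 := ⟨_, rfl⟩
  have hKpos : 0 < K := by rw [hKdef]; linarith
  have hlow' : ∀ r, R3 ≤ r → r - K / r ≤ v r := by
    intro r hr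
    rw [hKdef]
    exact hlow r hr
  set A := max R3 ((c^2 + 2*(c+ε)^2 + 2*ε*c + 1)/ε + 2*(c^2+2*K^2)/ε + 1) with hAdef
  have hAR3 : R3 ≤ A := le_max_left _ _
  have hS : (c^2 + 2*(c+ε)^2 + 2*ε*c + 1)/ε + 2*(c^2+2*K^2)/ε + 1 ≤ A := le_max_right _ _
  have n1 : (0:ℝ) ≤ (c^2 + 2*(c+ε)^2 + 2*ε*c + 1)/ε := by positivity
  have n2 : (0:ℝ) ≤ 2*(c^2+2*K^2)/ε := by positivity
  have hA1 : 1 ≤ A := by linarith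
  have hxf : ∀ x, A ≤ x → 1 ≤ x ∧ c^2 + 2*(c+ε)^2 + 2*ε*c + 1 ≤ x*ε ∧
      2*(c^2+2*K^2) ≤ x*ε := by
    intro x hx
    have hx1 : 1 ≤ x := le_trans hA1 hx
    refine ⟨hx1, ?_, ?_⟩
    · have t : (c^2 + 2*(c+ε)^2 + 2*ε*c + 1)/ε ≤ x := by linarith
      have := (div_le_iff₀ hε).1 t
      linarith
    · have t : 2*(c^2+2*K^2)/ε ≤ x := by linarith
      have := (div_le_iff₀ hε).1 t
      linarith
  by_cases hcase : ∃ r₅, A ≤ r₅ ∧ r₅ - c/r₅ - ε/r₅^2 ≤ v r₅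
  · obtain ⟨r₅, hr₅, hv₅⟩ := hcase
    refine ⟨r₅, le_trans hA1 hr₅, ?_⟩
    have hbar := myBarrier (φ := fun x => x - c/x - ε/x^2) (B := v)
      (φ' := fun x => 1 + c/x^2 + 2*ε/x^3) (B' := dv) (a := r₅)
      (fun x hx => by
        have hx0 : (0:ℝ) < x := by linarith
        have h := ((hasDerivAt_id x).sub (myDerivInv c x hx0.ne')).sub
          (myDerivInvSq ε x hx0.ne')
        refine h.congr_deriv ?_
        ring)
      (fun x hx => hodeD x (by linarith))
      hv₅
      ?_
    · exact fun r hr => hbar r hr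
    · intro x hx hvx
      have hxA : A ≤ x := le_trans hr₅ hx
      obtain ⟨hx1, hcnd1, hcnd2⟩ := hxf x hxA
      have hx0 : (0:ℝ) < x := by linarith
      rw [hdv x hx0, ← hvx]
      have hkey : (1 + (x - c/x - ε/x^2)^2) * (x - (x - c/x - ε/x^2)) / (c*x)
          - (1 + c/x^2 + 2*ε/x^3)
          = (ε*x^6 + (c*x+ε)*x^4 + (c*x+ε)^3 - c^2*x^5 - 2*ε*c*x^4 - 2*(c*x+ε)^2*x^3)
            / (c*x^7) := by
        field_simp
        ring
      have hnum : 0 < ε*x^6 + (c*x+ε)*x^4 + (c*x+ε)^3 - c^2*x^5 - 2*ε*c*x^4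
          - 2*(c*x+ε)^2*x^3 := by
        have hM : c*x + ε ≤ (c+ε)*x := by nlinarith [mul_nonneg hε.le (sub_nonneg.2 hx1)]
        have hM0 : (0:ℝ) ≤ c*x + ε := by positivity
        have m0 : (c*x+ε)^2 ≤ ((c+ε)*x)^2 := pow_le_pow_left₀ hM0 hM 2
        have m1 : 2*(c*x+ε)^2*x^3 ≤ 2*((c+ε)*x)^2*x^3 := by
          nlinarith [pow_nonneg hx0.le 3]
        have m1' : 2*((c+ε)*x)^2*x^3 = 2*(c+ε)^2*x^5 := by ring
        have m2 : (c^2 + 2*(c+ε)^2 + 2*ε*c + 1)*x^5 ≤ ε*x^6 := by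
          nlinarith [mul_le_mul_of_nonneg_right hcnd1 (pow_nonneg hx0.le 5)]
        have m3 : 2*ε*c*x^4 ≤ 2*ε*c*x^5 := by
          nlinarith [mul_le_mul_of_nonneg_left hx1 (mul_nonneg (mul_nonneg hε.le hcpos.le) (pow_nonneg hx0.le 4))]
        have z1 : (0:ℝ) ≤ (c*x+ε)*x^4 := by positivity
        have z2 : (0:ℝ) ≤ (c*x+ε)^3 := by positivity
        have z3 : (0:ℝ) < x^5 := by positivity
        nlinarith [m1, m2, m3, z1, z2, z3, m1']
      have hpos := div_pos hnum (show (0:ℝ) < c*x^7 by positivity)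
      linarith
  · push_neg at hcase
    exfalso
    set T := A * Real.exp (2*c*K/ε + 1) with hTdef
    have hA0 : (0:ℝ) < A := by linarith
    have hexp1 : (1:ℝ) ≤ Real.exp (2*c*K/ε + 1) := by
      rw [Real.one_le_exp_iff]
      positivity
    have hTA : A ≤ T := by
      calc A = A * 1 := by ring
      _ ≤ A * Real.exp (2*c*K/ε + 1) := by
          apply mul_le_mul_of_nonneg_left hexp1 hA0.le
    have hψd : ∀ x, A ≤ x → HasDerivAt
        (fun r => v r - r + c/r - (ε/(2*c)) * Real.log r)
        (dv x - 1 + (-(c/x^2)) - (ε/(2*c)) * x⁻¹) x := by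
      intro x hx
      have hx0 : (0:ℝ) < x := by linarith
      exact (((hodeD x hx0).sub (hasDerivAt_id x)).add (myDerivInv c x hx0.ne')).sub
        ((Real.hasDerivAt_log hx0.ne').const_mul (ε/(2*c)))
    have hψ0 : ∀ x, A ≤ x → 0 ≤ dv x - 1 + (-(c/x^2)) - (ε/(2*c)) * x⁻¹ := by
      intro x hx
      obtain ⟨hx1, hcnd1, hcnd2⟩ := hxf x hx
      have hx0 : (0:ℝ) < x := by linarith
      have hreg := hcase x hx
      have hvx : v x ≤ x := hup x (le_trans hAR3 hx)
      have hlx : x - K/x ≤ v x := hlow' x (le_trans hAR3 hx)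
      set b := x - v x with hbdef
      have hvb : v x = x - b := by simp only [hbdef]; ring
      have hb0 : 0 ≤ b := by simp only [hbdef]; linarith
      have hb1 : c*x + ε ≤ b*x^2 := by
        have h1 : c/x + ε/x^2 < b := by simp only [hbdef]; linarith
        have h2 : (c/x + ε/x^2)*x^2 = c*x + ε := by field_simp
        nlinarith [pow_pos hx0 2]
      have hbK : b*x ≤ K := by
        have h1 : b ≤ K/x := by simp only [hbdef]; linarith
        have h2 : (K/x)*x = K := by field_simp
        nlinarith
      clear_value b
      have hkey3 : dv x - 1 + (-(c/x^2)) - (ε/(2*c)) * x⁻¹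
          = ((1 + (x - b)^2)*b*x^2 - (c*x^3 + c^2*x) - ε*x^2/2) / (c*x^3) := by
        rw [hdv x hx0, hvb]
        field_simp
        ring
      have hnum3 : 0 ≤ (1 + (x - b)^2)*b*x^2 - (c*x^3 + c^2*x) - ε*x^2/2 := by
        have t2 : (c*x+ε)*x^2 ≤ b*x^4 := by
          nlinarith [mul_le_mul_of_nonneg_right hb1 (sq_nonneg x)]
        have t3 : b^2*x^3 ≤ K^2*x := by
          have h3 : b*x*(b*x) ≤ K*K := by
            nlinarith [mul_nonneg hb0 hx0.le]
          nlinarith [mul_le_mul_of_nonneg_right h3 hx0.le]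
        have t4 : 2*(c^2 + 2*K^2)*x ≤ ε*x^2 := by
          nlinarith [mul_le_mul_of_nonneg_right hcnd2 hx0.le]
        have t5 : (0:ℝ) ≤ b^3*x^2 := by positivity
        have t6 : (0:ℝ) ≤ c*x := by positivity
        have t7 : (0:ℝ) ≤ ε := hε.le
        linarith only [hb1, t2, t3, t4, t5, t6, t7]
      rw [hkey3]
      exact div_nonneg hnum3 (by positivity)
    have hmono := myMono hψd hψ0 A T le_rfl hTA
    have hT0 : (0:ℝ) < T := by
      simp only [hTdef]
      positivity
    have hlogT : Real.log T = Real.log A + (2*c*K/ε + 1) := by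
      simp only [hTdef]
      rw [Real.log_mul hA0.ne' (Real.exp_ne_zero _), Real.log_exp]
    have hregT := hcase T hTA
    have hlA : A - K/A ≤ v A := hlow' A hAR3
    have hKA : K/A ≤ K := div_le_self hKpos.le hA1
    have hcA : 0 < c/A := by positivity
    have hεT : 0 < ε/T^2 := by positivity
    have harith : (ε/(2*c)) * (2*c*K/ε + 1) = K + ε/(2*c) := by
      field_simp
    have hε2c : 0 < ε/(2*c) := by positivity
    nlinarith [hmono, hregT, hεT]

end stages

open Filter

set_option maxHeartbeats 1000000 in
theorem stmt10 (f : ℝ × ℝ → ℝ)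
    (hf : ContDiff ℝ 2 f)
    (hhom : ∀ c : ℝ, 0 < c → ∀ x y : ℝ, f (c * x, c * y) = c * f (x, y))
    (hfx : ∀ p : ℝ × ℝ, 0 < deriv (fun t => f (t, p.2)) p.1)
    (hfy : ∀ p : ℝ × ℝ, 0 < deriv (fun t => f (p.1, t)) p.2)
    (hnorm : f (0, 1) = 1)
    (c : ℝ) (hc : c = deriv (fun t => f (t, 1)) 0)
    (v dv : ℝ → ℝ) (hv0 : v 0 = 0)
    (hvpos : ∀ r : ℝ, 0 < r → 0 < v r)
    (hode : ∀ r : ℝ, 0 < r → HasDerivAt v (dv r) r ∧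
      f (dv r / (1 + (v r) ^ 2), v r / r) = 1)
    (u : ℝ → ℝ) (hu : ∀ r : ℝ, 0 < r → HasDerivAt u (v r) r) :
    (fun r : ℝ => v r - (r - c / r)) =o[atTop] (fun r : ℝ => (r ^ 2)⁻¹) ∧
    ∃ C : ℝ, (fun r : ℝ => u r - (r ^ 2 / 2 - c * Real.log r + C))
      =o[atTop] (fun r : ℝ => r⁻¹) := by
  have hcpos : 0 < c := by
    have h := hfx (0, 1)
    rw [hc]
    simpa using h
  have hlin0 := myLinear f hf hhom
  have hB1 : fderiv ℝ f 0 (0, 1) = 1 := by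
    have h := hlin0 0 1
    rw [hnorm] at h
    linarith
  have hA1 : c = fderiv ℝ f 0 (1, 0) := by
    have hfun : (fun t : ℝ => f (t, 1)) = fun t => t * (fderiv ℝ f 0 (1, 0)) + 1 := by
      funext t
      rw [hlin0 t 1, hB1]
      ring
    have hd : HasDerivAt (fun t : ℝ => t * (fderiv ℝ f 0 (1, 0)) + 1)
        (fderiv ℝ f 0 (1, 0)) 0 := by
      simpa using ((hasDerivAt_id (0:ℝ)).mul_const (fderiv ℝ f 0 (1, 0))).add_const 1
    rw [hc, hfun, hd.deriv]
  have hflin : ∀ x y : ℝ, f (x, y) = c * x + y := by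
    intro x y
    rw [hlin0 x y, hB1, ← hA1]
    ring
  have hdv : ∀ r, 0 < r → dv r = (1 + v r ^ 2) * (r - v r) / (c * r) := by
    intro r hr
    have he := (hode r hr).2
    rw [hflin] at he
    have h1 : (0:ℝ) < 1 + v r ^ 2 := by positivity
    field_simp at he
    field_simp
    linear_combination he
  have hodeD : ∀ r : ℝ, 0 < r → HasDerivAt v (dv r) r := fun r hr => (hode r hr).1
  obtain ⟨R1, hR11, hs1⟩ := stage1L hcpos hodeD hdv
  obtain ⟨R2, hR12, hR21, hs2⟩ := stage2L hcpos hodeD hdv hR11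
  have hs1r2 : ∀ r, R2 ≤ r → v r ≤ r := fun r hr => hs1 r (le_trans hR12 hr)
  obtain ⟨R3, hR23, hR31, hs25⟩ := stage25L hcpos hodeD hdv hR21 hs2 hs1r2
  have hupr3 : ∀ r, R3 ≤ r → v r ≤ r := fun r hr => hs1r2 r (le_trans hR23 hr)
  have hCU := claimUL hcpos hvpos hodeD hdv hR31 hupr3
  have hCL := claimLL hcpos hvpos hodeD hdv hR31 hupr3 hs25
  have part1 : ∀ ε : ℝ, 0 < ε → ∃ R, 1 ≤ R ∧ ∀ r, R ≤ r → |v r - (r - c/r)| ≤ ε/r^2 := by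
    intro ε hε
    obtain ⟨Ru, hRu1, hup'⟩ := hCU ε hε
    obtain ⟨Rl, hRl1, hlo'⟩ := hCL ε hε
    refine ⟨max Ru Rl, le_trans hRu1 (le_max_left _ _), fun r hr => ?_⟩
    have h1 := hup' r (le_trans (le_max_left _ _) hr)
    have h2 := hlo' r (le_trans (le_max_right _ _) hr)
    rw [abs_le]
    exact ⟨by linarith, by linarith⟩
  constructor
  · rw [Asymptotics.isLittleO_iff]
    intro C hC
    obtain ⟨R, hR1, hb⟩ := part1 C hC
    filter_upwards [eventually_ge_atTop R] with r hr
    have hr1 : 1 ≤ r := le_trans hR1 hr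
    have hr0 : (0:ℝ) < r := by linarith
    have h := hb r hr
    rw [Real.norm_eq_abs, Real.norm_eq_abs, abs_of_pos (show (0:ℝ) < (r^2)⁻¹ by positivity)]
    calc |v r - (r - c/r)| ≤ C/r^2 := h
      _ = C * (r^2)⁻¹ := by ring
  · -- the height function
    have hUd : ∀ x : ℝ, 0 < x → HasDerivAt (fun r => u r - (r^2/2 - c*Real.log r))
        (v x - (x - c/x)) x := by
      intro x hx
      have h1 : HasDerivAt (fun r : ℝ => r^2/2) x x := by
        have := (hasDerivAt_pow 2 x).div_const 2
        refine this.congr_deriv ?_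
        simp
      have h2 : HasDerivAt (fun r : ℝ => c*Real.log r) (c/x) x := by
        have := (Real.hasDerivAt_log hx.ne').const_mul c
        refine this.congr_deriv ?_
        ring
      exact (hu x hx).sub (h1.sub h2)
    -- monotone families
    have hPQ : ∀ ε : ℝ, 0 < ε → ∀ Re : ℝ, 1 ≤ Re →
        (∀ r, Re ≤ r → |v r - (r - c/r)| ≤ ε/r^2) →
        (∀ x y, Re ≤ x → x ≤ y →
          u y - (y^2/2 - c*Real.log y) + ε/y ≤ u x - (x^2/2 - c*Real.log x) + ε/x) ∧
        (∀ x y, Re ≤ x → x ≤ y →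
          u x - (x^2/2 - c*Real.log x) - ε/x ≤ u y - (y^2/2 - c*Real.log y) - ε/y) := by
      intro ε hε Re hRe1 hw
      constructor
      · have := myAnti (a := Re)
          (g := fun r => u r - (r^2/2 - c*Real.log r) + ε/r)
          (g' := fun x => v x - (x - c/x) + (-(ε/x^2)))
          (fun x hx => (hUd x (by linarith)).add (myDerivInv ε x (ne_of_gt (show (0:ℝ) < x by linarith))))
          (fun x hx => by
            have h := hw x hx
            have h2 := (abs_le.1 h).2
            linarith)
        intro x y hx hxy
        exact this x y hx hxy
      · have := myMono (a := Re)
          (g := fun r => u r - (r^2/2 - c*Real.log r) - ε/r)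
          (g' := fun x => v x - (x - c/x) - (-(ε/x^2)))
          (fun x hx => (hUd x (by linarith)).sub (myDerivInv ε x (ne_of_gt (show (0:ℝ) < x by linarith))))
          (fun x hx => by
            have h := hw x hx
            have h2 := (abs_le.1 h).1
            linarith)
        intro x y hx hxy
        exact this x y hx hxy
    obtain ⟨Ro, hRo1, hwo⟩ := part1 1 one_pos
    obtain ⟨hP1, hQ1⟩ := hPQ 1 one_pos Ro hRo1 hwo
    set S : Set ℝ := {y : ℝ | ∃ t : ℝ, Ro ≤ t ∧ y = u t - (t^2/2 - c*Real.log t) - 1/t}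
      with hSdef
    have hSne : S.Nonempty := ⟨u Ro - (Ro^2/2 - c*Real.log Ro) - 1/Ro, Ro, le_rfl, rfl⟩
    have hSbdd : BddAbove S := by
      refine ⟨u Ro - (Ro^2/2 - c*Real.log Ro) + 1/Ro, ?_⟩
      rintro y ⟨t, ht, rfl⟩
      have ht0 : (0:ℝ) < t := by linarith
      have h1 : u t - (t^2/2 - c*Real.log t) - 1/t ≤ u t - (t^2/2 - c*Real.log t) + 1/t := by
        have : (0:ℝ) < 1/t := by positivity
        linarith
      have h2 := hP1 Ro t le_rfl ht
      linarith
    set Cst := sSup S with hCdef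
    have hmain : ∀ ε : ℝ, 0 < ε → ∃ R', 1 ≤ R' ∧ ∀ r, R' ≤ r →
        |u r - (r^2/2 - c*Real.log r) - Cst| ≤ ε/r := by
      intro ε hε
      obtain ⟨Re, hRe1, hwe⟩ := part1 ε hε
      obtain ⟨hPe, hQe⟩ := hPQ ε hε Re hRe1 hwe
      refine ⟨max Re Ro, le_trans hRe1 (le_max_left _ _), fun r hr => ?_⟩
      have hrRe : Re ≤ r := le_trans (le_max_left _ _) hr
      have hrRo : Ro ≤ r := le_trans (le_max_right _ _) hr
      have hr0 : (0:ℝ) < r := by linarith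
      have hub : Cst ≤ u r - (r^2/2 - c*Real.log r) + ε/r := by
        apply csSup_le hSne
        rintro y ⟨t, ht, rfl⟩
        have ht0 : (0:ℝ) < t := by linarith
        set T := max t r with hTdef
        have htT : t ≤ T := le_max_left _ _
        have hrT : r ≤ T := le_max_right _ _
        have hT0 : (0:ℝ) < T := by linarith
        clear_value T
        have e1 : u t - (t^2/2 - c*Real.log t) - 1/t ≤
            u T - (T^2/2 - c*Real.log T) - 1/T := hQ1 t T ht htT
        have e2 : u T - (T^2/2 - c*Real.log T) - 1/T ≤
            u T - (T^2/2 - c*Real.log T) + ε/T := by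
          have p1 : (0:ℝ) < 1/T := by positivity
          have p2 : (0:ℝ) ≤ ε/T := by positivity
          linarith
        have e3 : u T - (T^2/2 - c*Real.log T) + ε/T ≤
            u r - (r^2/2 - c*Real.log r) + ε/r := hPe r T hrRe hrT
        linarith
      have hlb : u r - (r^2/2 - c*Real.log r) - ε/r ≤ Cst := by
        apply le_of_forall_pos_le_add
        intro η hη
        set T := max r ((1+ε)/η) with hTdef
        have hrT : r ≤ T := le_max_left _ _
        have hηT : (1+ε)/η ≤ T := le_max_right _ _
        have hT0 : (0:ℝ) < T := by linarith
        clear_value T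
        have e1 : u r - (r^2/2 - c*Real.log r) - ε/r ≤
            u T - (T^2/2 - c*Real.log T) - ε/T := hQe r T hrRe hrT
        have e2 : u T - (T^2/2 - c*Real.log T) - 1/T ≤ Cst := by
          apply le_csSup hSbdd
          exact ⟨T, le_trans hrRo hrT, rfl⟩
        have e3 : (1+ε)/T ≤ η := by
          rw [div_le_iff₀ hT0]
          have h4 := (div_le_iff₀ hη).1 hηT
          linarith
        have e5 : u T - (T^2/2 - c*Real.log T) - ε/T ≤
            u T - (T^2/2 - c*Real.log T) - 1/T + η := by
          have h2 : (0:ℝ) ≤ ε/T := by positivity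
          have e3' : 1/T + ε/T ≤ η := by rw [← add_div]; exact e3
          linarith [e3', h2]
        linarith
      rw [abs_le]
      constructor
      · linarith
      · linarith
    refine ⟨Cst, ?_⟩
    rw [Asymptotics.isLittleO_iff]
    intro C hC
    obtain ⟨R', hR'1, hb⟩ := hmain C hC
    filter_upwards [eventually_ge_atTop R'] with r hr
    have hr1 : 1 ≤ r := le_trans hR'1 hr
    have hr0 : (0:ℝ) < r := by linarith
    have h := hb r hr
    rw [Real.norm_eq_abs, Real.norm_eq_abs, abs_of_pos (show (0:ℝ) < r⁻¹ by positivity)]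
    have he : u r - (r^2/2 - c*Real.log r + Cst) = u r - (r^2/2 - c*Real.log r) - Cst := by
      ring
    rw [he]
    calc |u r - (r^2/2 - c*Real.log r) - Cst| ≤ C/r := h
      _ = C * r⁻¹ := by ring
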